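/- Let d ≥ 1, let g : ℝ^d → ℝ be measurable with ∫_{ℝ^d} (1 + ‖y‖₂²)|g(y)| dy < ∞, ∫_{ℝ^d} g(y) dy = 0, and ∫_{ℝ^d} y_j g(y) dy = 0 for every coordinate j, and set M = ∫_{ℝ^d} ‖y‖₂² |g(y)| dy. Let f : ℝ^d → ℝ be twice continuously differentiable with H = sup_{x} ‖∇²f(x)‖_{op} < ∞. Then for every k ∈ ℤ and b ∈ ℝ^d the integral ∫_{ℝ^d} 2^{k/2} g(2^{k/d}(x − b)) f(x) dx converges absolutely and |∫_{ℝ^d} 2^{k/2} g(2^{k/d}(x − b)) f(x) dx| ≤ (1/2) · H · M · 2^{−(2k/d + k/2)}. -/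

import Mathlib

set_option maxHeartbeats 1000000
open MeasureTheory

lemma taylor2_bound {E : Type*} [NormedAddCommGroup E] [NormedSpace ℝ E]
    (f : E → ℝ) (hf : ContDiff ℝ 2 f) (H : ℝ)
    (hH : ∀ x, ‖iteratedFDeriv ℝ 2 f x‖ ≤ H) (b y : E) :
    |f y - f b - fderiv ℝ f b (y - b)| ≤ H / 2 * ‖y - b‖ ^ 2 := by
  have hH0 : 0 ≤ H := le_trans (norm_nonneg _) (hH b)
  have hfd : Differentiable ℝ f := hf.differentiable (by norm_num)
  have hfc1 : ContDiff ℝ 1 (fderiv ℝ f) := hf.fderiv_right (m := 1) (by norm_num)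
  have hfd' : Differentiable ℝ (fderiv ℝ f) := hfc1.differentiable (by norm_num)
  have hbound : ∀ x, ‖fderiv ℝ (fderiv ℝ f) x‖ ≤ H := by
    intro x
    calc ‖fderiv ℝ (fderiv ℝ f) x‖ = ‖iteratedFDeriv ℝ 0 (fderiv ℝ (fderiv ℝ f)) x‖ :=
          by rw [norm_iteratedFDeriv_zero]
      _ = ‖iteratedFDeriv ℝ 1 (fderiv ℝ f) x‖ := norm_iteratedFDeriv_fderiv
      _ = ‖iteratedFDeriv ℝ 2 f x‖ := norm_iteratedFDeriv_fderiv
      _ ≤ H := hH x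
  have hlip : LipschitzWith H.toNNReal (fderiv ℝ f) := by
    refine lipschitzWith_of_nnnorm_fderiv_le hfd' (fun x => ?_)
    rw [← NNReal.coe_le_coe]
    simpa [Real.coe_toNNReal _ hH0] using hbound x
  have hlipd : ∀ x₁ x₂ : E, ‖fderiv ℝ f x₁ - fderiv ℝ f x₂‖ ≤ H * ‖x₁ - x₂‖ := by
    intro x₁ x₂
    have := hlip.dist_le_mul x₁ x₂
    rwa [dist_eq_norm, dist_eq_norm, Real.coe_toNNReal _ hH0] at this
  set v := y - b with hv
  have key : ∀ t : ℝ, HasDerivAt (fun t : ℝ => f (b + t • v)) ((fderiv ℝ f (b + t • v)) v) t := by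
    intro t
    have h1 : HasDerivAt (fun t : ℝ => b + t • v) v t := by
      simpa using ((hasDerivAt_id t).smul_const v).const_add b
    exact (hfd (b + t • v)).hasFDerivAt.comp_hasDerivAt t h1
  have hcont : Continuous fun t : ℝ => (fderiv ℝ f (b + t • v)) v := by
    have hc : Continuous (fderiv ℝ f) := hfc1.continuous
    exact (hc.comp (by continuity)).clm_apply continuous_const
  have ftc : f (b + (1:ℝ) • v) - f (b + (0:ℝ) • v)
      = ∫ t in (0:ℝ)..1, (fderiv ℝ f (b + t • v)) v :=
    (intervalIntegral.integral_eq_sub_of_hasDerivAt (fun t _ => key t)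
      (hcont.intervalIntegrable 0 1)).symm
  have hconst : (∫ _t in (0:ℝ)..1, (fderiv ℝ f b) v) = (fderiv ℝ f b) v := by simp
  have hmain : f y - f b - fderiv ℝ f b v
      = ∫ t in (0:ℝ)..1, ((fderiv ℝ f (b + t • v)) v - (fderiv ℝ f b) v) := by
    rw [intervalIntegral.integral_sub (hcont.intervalIntegrable 0 1)
      (intervalIntegrable_const), ← ftc, hconst]
    simp [hv]
  rw [hmain]
  have hb : ∀ᵐ t ∂(volume.restrict (Set.uIoc (0:ℝ) 1)),
      ‖(fderiv ℝ f (b + t • v)) v - (fderiv ℝ f b) v‖ ≤ H * ‖v‖ ^ 2 * t := by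
    rw [ae_restrict_iff' measurableSet_uIoc]
    filter_upwards with t ht
    rw [Set.uIoc_of_le zero_le_one] at ht
    have h1 : ‖(fderiv ℝ f (b + t • v)) v - (fderiv ℝ f b) v‖
        ≤ ‖fderiv ℝ f (b + t • v) - fderiv ℝ f b‖ * ‖v‖ := by
      rw [← ContinuousLinearMap.sub_apply]
      exact (fderiv ℝ f (b + t • v) - fderiv ℝ f b).le_opNorm v
    have h2 : ‖fderiv ℝ f (b + t • v) - fderiv ℝ f b‖ ≤ H * (t * ‖v‖) := by
      have := hlipd (b + t • v) b
      simpa [norm_smul, abs_of_pos ht.1] using this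
    calc ‖(fderiv ℝ f (b + t • v)) v - (fderiv ℝ f b) v‖
        ≤ (H * (t * ‖v‖)) * ‖v‖ := h1.trans (by nlinarith [norm_nonneg v])
      _ = H * ‖v‖ ^ 2 * t := by ring
  have hle := intervalIntegral.norm_integral_le_of_norm_le zero_le_one
    (by rw [← ae_restrict_iff' measurableSet_Ioc, ← Set.uIoc_of_le zero_le_one]; exact hb)
    (Continuous.intervalIntegrable (by continuity) 0 1)
  have hval : (∫ t in (0:ℝ)..1, H * ‖v‖ ^ 2 * t) = H / 2 * ‖v‖ ^ 2 := by
    rw [intervalIntegral.integral_const_mul, integral_id]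
    ring
  rw [hval] at hle
  simpa [Real.norm_eq_abs, abs_of_nonneg (show (0:ℝ) ≤ H / 2 * ‖v‖ ^ 2 by positivity)]
    using hle

theorem statement9 (d : ℕ) (hd : 1 ≤ d)
    (g : EuclideanSpace ℝ (Fin d) → ℝ) (hgm : Measurable g)
    (hgint : Integrable (fun y : EuclideanSpace ℝ (Fin d) => (1 + ‖y‖ ^ 2) * |g y|))
    (hg0 : ∫ y : EuclideanSpace ℝ (Fin d), g y = 0)
    (hg1 : ∀ j : Fin d, ∫ y : EuclideanSpace ℝ (Fin d), y j * g y = 0)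
    (M : ℝ) (hM : M = ∫ y : EuclideanSpace ℝ (Fin d), ‖y‖ ^ 2 * |g y|)
    (f : EuclideanSpace ℝ (Fin d) → ℝ) (hf : ContDiff ℝ 2 f)
    (H : ℝ) (hH : ∀ x, ‖iteratedFDeriv ℝ 2 f x‖ ≤ H)
    (k : ℤ) (b : EuclideanSpace ℝ (Fin d)) :
    Integrable (fun x : EuclideanSpace ℝ (Fin d) =>
      (2 : ℝ) ^ ((k : ℝ) / 2) * g (((2 : ℝ) ^ ((k : ℝ) / d)) • (x - b)) * f x) ∧
    |∫ x : EuclideanSpace ℝ (Fin d),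
        (2 : ℝ) ^ ((k : ℝ) / 2) * g (((2 : ℝ) ^ ((k : ℝ) / d)) • (x - b)) * f x| ≤
      (1 / 2) * H * M * (2 : ℝ) ^ (-(2 * (k : ℝ) / d + (k : ℝ) / 2)) := by
  have hd0 : (d : ℝ) ≠ 0 := Nat.cast_ne_zero.mpr (by omega)
  set a : ℝ := (2 : ℝ) ^ ((k : ℝ) / d) with ha_def
  have ha : 0 < a := Real.rpow_pos_of_pos two_pos _
  have hH0 : 0 ≤ H := le_trans (norm_nonneg _) (hH b)
  have habs : ∀ y : EuclideanSpace ℝ (Fin d), ‖y‖ ≤ 1 + ‖y‖ ^ 2 := fun y => by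
    nlinarith [norm_nonneg y, sq_nonneg (‖y‖ - 1)]
  -- integrability of pieces of g
  have hgI : Integrable g := by
    refine hgint.mono' hgm.aestronglyMeasurable (Filter.Eventually.of_forall fun y => ?_)
    rw [Real.norm_eq_abs]
    nlinarith [abs_nonneg (g y), sq_nonneg ‖y‖]
  have hgy2 : Integrable (fun y : EuclideanSpace ℝ (Fin d) => ‖y‖ ^ 2 * |g y|) := by
    refine hgint.mono' ((measurable_norm.pow_const 2).mul hgm.abs).aestronglyMeasurable
      (Filter.Eventually.of_forall fun y => ?_)
    rw [Real.norm_eq_abs, abs_of_nonneg (by positivity)]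
    nlinarith [abs_nonneg (g y), sq_nonneg ‖y‖]
  have hcoord : ∀ (y : EuclideanSpace ℝ (Fin d)) (j : Fin d), |y j| ≤ ‖y‖ := by
    intro y j
    have h1 : inner ℝ (EuclideanSpace.single j (1:ℝ)) y = y j := by
      rw [EuclideanSpace.inner_single_left]; simp
    have h2 := abs_real_inner_le_norm (EuclideanSpace.single j (1:ℝ)) y
    rw [h1, EuclideanSpace.norm_single] at h2
    simpa using h2
  have hgyj : ∀ j : Fin d, Integrable (fun y : EuclideanSpace ℝ (Fin d) => y j * g y) := by
    intro j
    refine hgint.mono' (((EuclideanSpace.proj j).continuous.measurable).mul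
      hgm).aestronglyMeasurable (Filter.Eventually.of_forall fun y => ?_)
    rw [Real.norm_eq_abs, abs_mul]
    have := hcoord y j
    have := habs y
    nlinarith [abs_nonneg (g y), abs_nonneg (y j), sq_nonneg ‖y‖, norm_nonneg y]
  -- the rescaled function
  set L : EuclideanSpace ℝ (Fin d) →L[ℝ] ℝ := fderiv ℝ f b with hL
  set F : EuclideanSpace ℝ (Fin d) → ℝ := fun u => g u * f (b + a⁻¹ • u) with hF
  have hpt : ∀ x : EuclideanSpace ℝ (Fin d),
      (2 : ℝ) ^ ((k : ℝ) / 2) * g (a • (x - b)) * f x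
        = (2 : ℝ) ^ ((k : ℝ) / 2) * F (a • (x - b)) := by
    intro x
    have : a⁻¹ • a • (x - b) = x - b := inv_smul_smul₀ ha.ne' _
    simp only [hF, this, add_sub_cancel]
    ring
  have hFmeas : AEStronglyMeasurable F volume :=
    (hgm.mul (hf.continuous.comp
      (continuous_const.add (continuous_id.const_smul a⁻¹))).measurable).aestronglyMeasurable
  -- growth bound on f
  have hnorm_inv : ∀ u : EuclideanSpace ℝ (Fin d), ‖a⁻¹ • u‖ = a⁻¹ * ‖u‖ := by
    intro u
    rw [norm_smul, Real.norm_eq_abs, abs_of_pos (inv_pos.mpr ha)]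
  have htay : ∀ u : EuclideanSpace ℝ (Fin d),
      |f (b + a⁻¹ • u) - f b - L (a⁻¹ • u)| ≤ H / 2 * (a⁻¹ * ‖u‖) ^ 2 := by
    intro u
    have := taylor2_bound f hf H hH b (b + a⁻¹ • u)
    rwa [add_sub_cancel_left, hnorm_inv u] at this
  have hfb : ∀ u : EuclideanSpace ℝ (Fin d),
      |f (b + a⁻¹ • u)| ≤ |f b| + (‖L‖ * a⁻¹) * ‖u‖ + (H / 2 * a⁻¹ ^ 2) * ‖u‖ ^ 2 := by
    intro u
    have h1 := htay u
    have h2 : |L (a⁻¹ • u)| ≤ ‖L‖ * (a⁻¹ * ‖u‖) := by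
      have := L.le_opNorm (a⁻¹ • u)
      rwa [Real.norm_eq_abs, hnorm_inv u] at this
    have h1' : |f (b + a⁻¹ • u) - f b - L (a⁻¹ • u)| ≤ (H / 2 * a⁻¹ ^ 2) * ‖u‖ ^ 2 :=
      h1.trans (le_of_eq (by ring))
    have h2' : |L (a⁻¹ • u)| ≤ (‖L‖ * a⁻¹) * ‖u‖ := h2.trans (le_of_eq (by ring))
    have h3 : |f (b + a⁻¹ • u)|
        ≤ |f (b + a⁻¹ • u) - f b - L (a⁻¹ • u)| + |L (a⁻¹ • u)| + |f b| := by
      calc |f (b + a⁻¹ • u)|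
          = |(f (b + a⁻¹ • u) - f b - L (a⁻¹ • u)) + L (a⁻¹ • u) + f b| := by
            congr 1; ring
        _ ≤ _ := abs_add_three _ _ _
    linarith
  set C : ℝ := |f b| + ‖L‖ * a⁻¹ + H / 2 * a⁻¹ ^ 2 with hC
  have hC0 : 0 ≤ |f b| := abs_nonneg _
  have hC1 : 0 ≤ ‖L‖ * a⁻¹ := mul_nonneg (norm_nonneg _) (inv_pos.mpr ha).le
  have hC2 : 0 ≤ H / 2 * a⁻¹ ^ 2 := by positivity
  have hFint : Integrable F := by
    refine (hgint.const_mul C).mono' hFmeas (Filter.Eventually.of_forall fun u => ?_)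
    rw [Real.norm_eq_abs, abs_mul]
    have hstep : |f b| + (‖L‖ * a⁻¹) * ‖u‖ + (H / 2 * a⁻¹ ^ 2) * ‖u‖ ^ 2
        ≤ C * (1 + ‖u‖ ^ 2) := by
      have hmid := mul_le_mul_of_nonneg_left (habs u) hC1
      have e0 := mul_nonneg hC0 (sq_nonneg ‖u‖)
      rw [hC]; nlinarith
    calc |g u| * |f (b + a⁻¹ • u)| ≤ |g u| * (C * (1 + ‖u‖ ^ 2)) :=
          mul_le_mul_of_nonneg_left ((hfb u).trans hstep) (abs_nonneg _)
      _ = C * ((1 + ‖u‖ ^ 2) * |g u|) := by ring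
  -- Integrability of the original integrand
  have h1 : Integrable (fun x : EuclideanSpace ℝ (Fin d) => F (a • x)) :=
    hFint.comp_smul ha.ne'
  have h2 : Integrable (fun x : EuclideanSpace ℝ (Fin d) => F (a • (x - b))) :=
    h1.comp_sub_right b
  have hIorig : Integrable (fun x : EuclideanSpace ℝ (Fin d) =>
      (2 : ℝ) ^ ((k : ℝ) / 2) * g (a • (x - b)) * f x) := by
    exact (h2.const_mul ((2:ℝ) ^ ((k:ℝ)/2))).congr
      (Filter.Eventually.of_forall fun x => (hpt x).symm)
  refine ⟨hIorig, ?_⟩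
  -- value of the integral
  have had : a ^ d = (2 : ℝ) ^ (k : ℝ) := by
    rw [ha_def, ← Real.rpow_natCast ((2:ℝ) ^ ((k:ℝ)/d)) d, ← Real.rpow_mul (by norm_num),
      div_mul_cancel₀ _ hd0]
  have hIval : (∫ x : EuclideanSpace ℝ (Fin d),
      (2 : ℝ) ^ ((k : ℝ) / 2) * g (a • (x - b)) * f x)
        = (2 : ℝ) ^ ((k : ℝ) / 2) * (((2:ℝ) ^ (k:ℝ))⁻¹ * ∫ u, F u) := by
    simp_rw [hpt]
    rw [MeasureTheory.integral_const_mul]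
    congr 1
    calc (∫ x : EuclideanSpace ℝ (Fin d), F (a • (x - b)))
        = ∫ x : EuclideanSpace ℝ (Fin d), (fun u => F (a • u)) (x - b) := rfl
      _ = ∫ u : EuclideanSpace ℝ (Fin d), F (a • u) :=
          integral_sub_right_eq_self (fun u => F (a • u)) b
      _ = |(a ^ Module.finrank ℝ (EuclideanSpace ℝ (Fin d)))⁻¹| • ∫ u, F u :=
          MeasureTheory.Measure.integral_comp_smul volume F a
      _ = ((2:ℝ) ^ (k:ℝ))⁻¹ * ∫ u, F u := by
          rw [finrank_euclideanSpace_fin, had, smul_eq_mul,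
            abs_of_pos (inv_pos.mpr (Real.rpow_pos_of_pos two_pos _))]
  -- linear term decomposition
  have hdecomp : ∀ u : EuclideanSpace ℝ (Fin d),
      L u = ∑ j, L (EuclideanSpace.single j (1:ℝ)) * u j := by
    intro u
    conv_lhs => rw [← (EuclideanSpace.basisFun (Fin d) ℝ).sum_repr u]
    rw [map_sum]
    refine Finset.sum_congr rfl fun j _ => ?_
    rw [EuclideanSpace.basisFun_repr, EuclideanSpace.basisFun_apply, _root_.map_smul, smul_eq_mul,
      mul_comm]
  have e2 : (fun u : EuclideanSpace ℝ (Fin d) => g u * L (a⁻¹ • u))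
      = fun u => ∑ j, (a⁻¹ * L (EuclideanSpace.single j (1:ℝ))) * (u j * g u) := by
    funext u
    rw [_root_.map_smul, smul_eq_mul, hdecomp u, Finset.mul_sum, Finset.mul_sum]
    exact Finset.sum_congr rfl fun j _ => by ring
  have hglin_int : Integrable (fun u : EuclideanSpace ℝ (Fin d) => g u * L (a⁻¹ • u)) := by
    rw [e2]; exact integrable_finset_sum _ fun j _ => (hgyj j).const_mul _
  have hglin0 : (∫ u : EuclideanSpace ℝ (Fin d), g u * L (a⁻¹ • u)) = 0 := by
    rw [e2, integral_finset_sum _ fun j _ => (hgyj j).const_mul _]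
    refine Finset.sum_eq_zero fun j _ => ?_
    rw [MeasureTheory.integral_const_mul, hg1 j, mul_zero]
  have hconst0 : (∫ u : EuclideanSpace ℝ (Fin d), g u * f b) = 0 := by
    rw [MeasureTheory.integral_mul_const, hg0, zero_mul]
  have hFval : (∫ u, F u) = ∫ u : EuclideanSpace ℝ (Fin d),
      g u * (f (b + a⁻¹ • u) - f b - L (a⁻¹ • u)) := by
    have i1 : (∫ u : EuclideanSpace ℝ (Fin d), ((F u - g u * f b) - g u * L (a⁻¹ • u)))
        = (∫ u : EuclideanSpace ℝ (Fin d), (F u - g u * f b))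
          - ∫ u : EuclideanSpace ℝ (Fin d), g u * L (a⁻¹ • u) :=
      integral_sub (hFint.sub (hgI.mul_const (f b))) hglin_int
    have i2 : (∫ u : EuclideanSpace ℝ (Fin d), (F u - g u * f b))
        = (∫ u, F u) - ∫ u : EuclideanSpace ℝ (Fin d), g u * f b :=
      integral_sub hFint (hgI.mul_const (f b))
    have i3 : (∫ u : EuclideanSpace ℝ (Fin d), g u * (f (b + a⁻¹ • u) - f b - L (a⁻¹ • u)))
        = ∫ u : EuclideanSpace ℝ (Fin d), ((F u - g u * f b) - g u * L (a⁻¹ • u)) :=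
      integral_congr_ae (Filter.Eventually.of_forall fun u => by simp only [hF]; ring)
    rw [i3, i1, i2, hconst0, hglin0]
    ring
  -- bound the remainder integral
  have hRbound : |∫ u : EuclideanSpace ℝ (Fin d),
      g u * (f (b + a⁻¹ • u) - f b - L (a⁻¹ • u))| ≤ (H / 2 * a⁻¹ ^ 2) * M := by
    have hb : ∀ u : EuclideanSpace ℝ (Fin d),
        ‖g u * (f (b + a⁻¹ • u) - f b - L (a⁻¹ • u))‖
          ≤ (H / 2 * a⁻¹ ^ 2) * (‖u‖ ^ 2 * |g u|) := by
      intro u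
      rw [Real.norm_eq_abs, abs_mul]
      calc |g u| * |f (b + a⁻¹ • u) - f b - L (a⁻¹ • u)|
          ≤ |g u| * (H / 2 * (a⁻¹ * ‖u‖) ^ 2) :=
            mul_le_mul_of_nonneg_left (htay u) (abs_nonneg _)
        _ = (H / 2 * a⁻¹ ^ 2) * (‖u‖ ^ 2 * |g u|) := by ring
    have := MeasureTheory.norm_integral_le_of_norm_le (hgy2.const_mul (H / 2 * a⁻¹ ^ 2))
      (Filter.Eventually.of_forall hb)
    rw [MeasureTheory.integral_const_mul] at this
    rw [hM]
    simpa [Real.norm_eq_abs] using this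
  -- put everything together
  rw [hIval, hFval]
  have hnn : (0:ℝ) ≤ (2 : ℝ) ^ ((k : ℝ) / 2) * ((2:ℝ) ^ (k:ℝ))⁻¹ := by positivity
  have step : |(2 : ℝ) ^ ((k : ℝ) / 2) * (((2:ℝ) ^ (k:ℝ))⁻¹ * ∫ u : EuclideanSpace ℝ (Fin d),
      g u * (f (b + a⁻¹ • u) - f b - L (a⁻¹ • u)))|
      ≤ (2 : ℝ) ^ ((k : ℝ) / 2) * (((2:ℝ) ^ (k:ℝ))⁻¹ * ((H / 2 * a⁻¹ ^ 2) * M)) := by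
    rw [abs_mul, abs_mul, abs_of_pos (Real.rpow_pos_of_pos two_pos _),
      abs_of_pos (inv_pos.mpr (Real.rpow_pos_of_pos two_pos _))]
    exact mul_le_mul_of_nonneg_left (mul_le_mul_of_nonneg_left hRbound
      (inv_pos.mpr (Real.rpow_pos_of_pos two_pos _)).le)
      (Real.rpow_pos_of_pos two_pos _).le
  refine step.trans (le_of_eq ?_)
  -- final exponent arithmetic
  rw [ha_def, ← Real.rpow_neg two_pos.le, ← Real.rpow_neg two_pos.le,
    ← Real.rpow_natCast ((2:ℝ) ^ (-((k:ℝ)/d))) 2, ← Real.rpow_mul two_pos.le]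
  rw [show -(2 * (k:ℝ) / d + (k:ℝ) / 2) = (k:ℝ)/2 + (-(k:ℝ) + -((k:ℝ)/d) * (2:ℕ)) from by
    push_cast; ring]
  rw [Real.rpow_add two_pos, Real.rpow_add two_pos]
  ring
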